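/- arXiv:2212.08161 — 2 statements merged into one kernel-verified Lean document; each statement's English description precedes it below -/
import Mathlib

section
/- Let U, F be natural numbers with U > F > 1, and let M be a real number with F < M ≤ U. Then (1 - 1/U)^((M-1)/(F-1)) < 1 - M/(U·F). -/
open Real

/-- Midpoint bound: `log (1+1/u) > 2/(2u+1)` for `u ≥ 1`. -/
lemma logA (u : ℝ) (hu : 1 ≤ u) : 2 / (2*u+1) < Real.log (1 + 1/u) := by
  have hu0 : (0:ℝ) < u := by linarith
  have hpos : (0:ℝ) < 1 + 1/u := by positivity
  set x := Real.log (1 + 1/u) with hx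
  have hx0 : 0 < x := Real.log_pos (by
    have : 0 < 1/u := by positivity
    linarith)
  have hex : Real.exp x = 1 + 1/u := Real.exp_log hpos
  have hx1 : x ≤ 1 := by
    have h2 : (1:ℝ) + 1/u ≤ 2 := by
      have : 1/u ≤ 1 := by rw [div_le_one hu0]; linarith
      linarith
    have he1 : (2:ℝ) < Real.exp 1 := by
      have := Real.add_one_lt_exp (one_ne_zero (α := ℝ))
      linarith
    have : Real.exp x < Real.exp 1 := by rw [hex]; linarith
    exact (Real.exp_lt_exp.mp this).le
  -- upper Taylor bound for exp
  have hub := Real.exp_bound' hx0.le hx1 (n := 4) (by norm_num)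
  simp [Finset.sum_range_succ, Nat.factorial] at hub
  -- key: (x-2) * exp x + x + 2 > 0
  have hkey : 0 < (x - 2) * Real.exp x + x + 2 := by
    nlinarith [mul_nonneg (sub_nonneg.2 hub) (by linarith : (0:ℝ) ≤ 2 - x),
      pow_pos hx0 3, pow_pos hx0 4, pow_pos hx0 5, hx0.le, hx1]
  -- conclude
  have hexu : u * (Real.exp x - 1) = 1 := by
    rw [hex]; field_simp; ring
  rw [div_lt_iff₀ (by linarith : (0:ℝ) < 2*u+1)]
  nlinarith [mul_pos hu0 hkey, hexu, Real.exp_pos x]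

/-- Trapezoid bound: `log (1+1/k) < (2k+1)/(2k(k+1))` for `k > 0`. -/
lemma logB (k : ℝ) (hk : 0 < k) : Real.log (1 + 1/k) < (2*k+1) / (2*k*(k+1)) := by
  have hpos : (0:ℝ) < 1 + 1/k := by positivity
  set x := Real.log (1 + 1/k) with hx
  have hx0 : 0 < x := Real.log_pos (by
    have : 0 < 1/k := by positivity
    linarith)
  have hex : Real.exp x = 1 + 1/k := Real.exp_log hpos
  have hq : 1 + x + x^2/2 ≤ Real.exp x := Real.quadratic_le_exp_of_nonneg hx0.le
  have hprod : Real.exp (-x) * Real.exp x = 1 := by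
    rw [← Real.exp_add]; simp
  -- 2x < exp x - exp (-x)
  have hkey : 2*x < Real.exp x - Real.exp (-x) := by
    nlinarith [Real.exp_pos x, Real.exp_pos (-x), hq, hprod, pow_pos hx0 4,
      mul_pos hx0 hx0, sq_nonneg (x*x)]
  have hnex : Real.exp (-x) = k / (k+1) := by
    rw [Real.exp_neg, hex]
    rw [eq_div_iff (by linarith : (k:ℝ)+1 ≠ 0)]
    field_simp
  have hdiff : Real.exp x - Real.exp (-x) = (2*k+1)/(k*(k+1)) := by
    rw [hex, hnex]; field_simp; ring
  rw [hdiff] at hkey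
  have hfin : (2*k+1)/(2*k*(k+1)) = (2*k+1)/(k*(k+1))/2 := by
    rw [div_div]; congr 1; ring
  rw [hfin]
  linarith

/-- Case (ii): `(1-1/U)^((U-1)/(F-1)) < 1 - 1/F`. -/
lemma caseii (U F : ℕ) (hUF : U > F) (hF : F > 1) :
    (1 - 1/(U:ℝ)) ^ (((U:ℝ)-1)/((F:ℝ)-1)) < 1 - 1/(F:ℝ) := by
  have hF2 : (2:ℝ) ≤ (F:ℝ) := by exact_mod_cast hF
  have hUFr : (F:ℝ) + 1 ≤ (U:ℝ) := by exact_mod_cast hUF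
  set u : ℝ := (U:ℝ) - 1 with hu
  set k : ℝ := (F:ℝ) - 1 with hkdef
  have hk1 : 1 ≤ k := by simp [hkdef]; linarith
  have hk0 : 0 < k := by linarith
  have huk : k + 1 ≤ u := by simp [hu, hkdef]; linarith
  have hu1 : 1 ≤ u := by linarith
  have hu0 : 0 < u := by linarith
  have ha : (1 - 1/(U:ℝ)) = (1 + 1/u)⁻¹ := by
    have hU0 : (0:ℝ) < (U:ℝ) := by linarith
    have : (U:ℝ) = u + 1 := by simp [hu]
    rw [this]
    field_simp; ring
  have hb : (1 - 1/(F:ℝ)) = (1 + 1/k)⁻¹ := by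
    have : (F:ℝ) = k + 1 := by simp [hkdef]
    rw [this]
    field_simp; ring
  have hA := logA u hu1
  have hB := logB k hk0
  have h1u : (0:ℝ) < 1 + 1/u := by positivity
  have h1k : (0:ℝ) < 1 + 1/k := by positivity
  have hapos : (0:ℝ) < (1 + 1/u)⁻¹ := by positivity
  rw [ha, hb]
  rw [Real.rpow_def_of_pos hapos, Real.log_inv]
  rw [show ((1:ℝ) + 1/k)⁻¹ = Real.exp (Real.log ((1+1/k)⁻¹)) from (Real.exp_log (by positivity)).symm]
  rw [Real.log_inv]
  apply Real.exp_lt_exp.mpr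
  -- need : -log(1+1/u) * (u/k) < -log(1+1/k)
  rw [neg_mul, neg_lt_neg_iff]
  -- need : log(1+1/k) < log(1+1/u) * (u/k)
  rw [show Real.log (1+1/u) * (u/k) = (Real.log (1+1/u) * u)/k from by ring,
    lt_div_iff₀ hk0]
  -- need : log(1+1/k) * k < log(1+1/u) * u
  have h2 : Real.log (1+1/k) * k < (2*k+1)/(2*(k+1)) := by
    have := mul_lt_mul_of_pos_right hB hk0
    have heq : (2*k+1)/(2*k*(k+1)) * k = (2*k+1)/(2*(k+1)) := by
      field_simp
    linarith [heq ▸ this]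
  have h3 : (2*u)/(2*u+1) < Real.log (1+1/u) * u := by
    have := mul_lt_mul_of_pos_right hA hu0
    have heq : 2/(2*u+1) * u = (2*u)/(2*u+1) := by ring
    linarith [heq ▸ this]
  have h4 : (2*k+1)/(2*(k+1)) ≤ (2*u)/(2*u+1) := by
    rw [div_le_div_iff₀ (by linarith) (by linarith)]
    nlinarith
  linarith

/-- Key inequality of Case (iii). -/
theorem stmt_8 (U F : ℕ) (hUF : U > F) (hF : F > 1) (M : ℝ)
    (hMF : (F : ℝ) < M) (hMU : M ≤ (U : ℝ)) :
    (1 - 1 / (U : ℝ)) ^ ((M - 1) / ((F : ℝ) - 1)) < 1 - M / ((U : ℝ) * (F : ℝ)) := by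
  have hF2 : (2:ℝ) ≤ (F:ℝ) := by exact_mod_cast hF
  have hUFr : (F:ℝ) + 1 ≤ (U:ℝ) := by exact_mod_cast hUF
  have hU0 : (0:ℝ) < (U:ℝ) := by linarith
  have hF0 : (0:ℝ) < (F:ℝ) := by linarith
  set a : ℝ := 1 - 1/(U:ℝ) with hadef
  have ha0 : 0 < a := by
    have h : 1/(U:ℝ) < 1 := by rw [div_lt_one hU0]; linarith
    simp only [hadef]; linarith
  set T : ℝ := ((U:ℝ)-1)/((F:ℝ)-1) with hTdef
  set w₁ : ℝ := ((U:ℝ) - M)/((U:ℝ) - (F:ℝ)) with hw1def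
  set w₂ : ℝ := (M - (F:ℝ))/((U:ℝ) - (F:ℝ)) with hw2def
  have hUF0 : (0:ℝ) < (U:ℝ) - (F:ℝ) := by linarith
  have hw1 : 0 ≤ w₁ := by
    apply div_nonneg (by linarith) hUF0.le
  have hw2 : 0 < w₂ := by
    apply div_pos (by linarith) hUF0
  have hsum : w₁ + w₂ = 1 := by
    rw [hw1def, hw2def, ← add_div, div_eq_one_iff_eq hUF0.ne']
    ring
  have hFm1 : ((F:ℝ) - 1) ≠ 0 := ne_of_gt (by linarith)
  have hexp : (M - 1)/((F:ℝ) - 1) = w₁ * 1 + w₂ * T := by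
    rw [hw1def, hw2def, hTdef]
    field_simp
    ring
  rw [hexp, Real.rpow_add ha0, show w₁ * 1 = 1 * w₁ from by ring,
    Real.rpow_mul ha0.le, show w₂ * T = T * w₂ from by ring, Real.rpow_mul ha0.le]
  have hgm := Real.geom_mean_le_arith_mean2_weighted hw1 hw2.le
    (Real.rpow_nonneg ha0.le 1) (Real.rpow_nonneg ha0.le T) hsum
  have hcii : a ^ T < 1 - 1/(F:ℝ) := caseii U F hUF hF
  have hone : a ^ (1:ℝ) = a := Real.rpow_one a
  calc (a ^ (1:ℝ)) ^ w₁ * (a ^ T) ^ w₂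
      ≤ w₁ * a ^ (1:ℝ) + w₂ * a ^ T := hgm
    _ < w₁ * a + w₂ * (1 - 1/(F:ℝ)) := by
        rw [hone]
        have := mul_lt_mul_of_pos_left hcii hw2
        linarith
    _ = 1 - M / ((U:ℝ) * (F:ℝ)) := by
        have h1 : ((U:ℝ)) ≠ 0 := hU0.ne'
        have h2 : ((F:ℝ)) ≠ 0 := hF0.ne'
        have h3 : ((U:ℝ) - (F:ℝ)) ≠ 0 := hUF0.ne'
        rw [hadef, hw1def, hw2def]
        field_simp
        ring
end

section
/- Let U, M, F be natural numbers with U ≥ M ≥ F > 1 and F dividing M, and let K = M/F. Then 1 - ((U-K)/U)^(F-1) ≤ 1 - ((U-1)/U)^(M-1), i.e., P_perflow ≤ P_random. -/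
/-- Key arithmetic inequality: if c·n·u ≤ B then (B+c)^n (u-1) ≤ B^n u. -/
lemma key_ineq (n : ℕ) (u B c : ℝ) (hB : 0 < B) (hc : 0 < c) (hu : 1 < u)
    (h : c * n * u ≤ B) : (B + c) ^ n * (u - 1) ≤ B ^ n * u := by
  rcases Nat.eq_zero_or_pos n with hn | hn
  · subst hn; simpa using by linarith
  set x : ℝ := c / B with hxdef
  have hu0 : (0:ℝ) < u := lt_trans one_pos hu
  have hx0 : 0 < x := div_pos hc hB
  have hnxu : (n : ℝ) * x * u ≤ 1 := by
    have he : (n:ℝ) * x * u = (c * n * u) / B := by rw [hxdef]; ring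
    rw [he, div_le_one hB]; exact h
  have hnx : (n : ℝ) * x ≤ 1 / u := by
    rw [le_div_iff₀ hu0]; linarith
  have hn1 : (1:ℝ) ≤ (n:ℝ) := by exact_mod_cast hn
  have hx1 : x < 1 := by
    have h1u : 1 / u < 1 := by rw [div_lt_one hu0]; exact hu
    nlinarith
  -- Bernoulli: 1 - n x ≤ (1-x)^n
  have hbern : 1 - (n:ℝ) * x ≤ (1 - x) ^ n := by
    have := one_add_mul_le_pow (a := -x) (by linarith) n
    simpa [sub_eq_add_neg, mul_comm] using this
  have hpos : (0:ℝ) < 1 - (n:ℝ) * x := by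
    have : 1 / u < 1 := by rw [div_lt_one hu0]; exact hu
    linarith
  have h1x : (0:ℝ) < (1 - x) ^ n := lt_of_lt_of_le hpos hbern
  -- (1+x)^n (1-x)^n ≤ 1
  have hmul : (1 + x) ^ n * (1 - x) ^ n ≤ 1 := by
    rw [← mul_pow]
    have h2 : (1+x)*(1-x) = 1 - x^2 := by ring
    rw [h2]
    apply pow_le_one₀ (by nlinarith) (by nlinarith)
  have h6 : (1 + x) ^ n ≤ 1 / (1 - x) ^ n := by
    rw [le_div_iff₀ h1x]; exact hmul
  have h7 : (1 + x) ^ n ≤ u / (u - 1) := by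
    calc (1+x)^n ≤ 1 / (1-x)^n := h6
      _ ≤ 1 / (1 - (n:ℝ)*x) := one_div_le_one_div_of_le hpos hbern
      _ ≤ u / (u-1) := by
          rw [div_le_div_iff₀ hpos (by linarith)]
          nlinarith
  have hBc : B + c = B * (1 + x) := by
    rw [hxdef]; field_simp
  calc (B + c)^n * (u-1) = B^n * ((1+x)^n * (u-1)) := by rw [hBc, mul_pow]; ring
    _ ≤ B^n * (u / (u-1) * (u-1)) := by
        apply mul_le_mul_of_nonneg_left _ (by positivity)
        apply mul_le_mul_of_nonneg_right h7 (by linarith)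
    _ = B^n * u := by rw [div_mul_cancel₀ _ (by linarith : u - 1 ≠ 0)]

lemma aux_ineq (F : ℕ) (hF : 2 ≤ F) (K : ℕ) (hK : 1 ≤ K) (u : ℝ)
    (hu : ((K * F : ℕ) : ℝ) ≤ u) :
    ((u - 1) / u) ^ (K * F - 1) ≤ ((u - (K : ℝ)) / u) ^ (F - 1) := by
  induction K, hK using Nat.le_induction with
  | base => simp
  | succ K hK ih =>
    have hKF : ((K * F : ℕ) : ℝ) ≤ u := by
      refine le_trans ?_ hu
      exact_mod_cast Nat.mul_le_mul_right F (Nat.le_succ K)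
    have ih' := ih hKF
    have hcast : (((K+1) * F : ℕ) : ℝ) = ((K:ℝ)+1) * F := by push_cast; ring
    have hF2 : (2:ℝ) ≤ (F:ℝ) := by exact_mod_cast hF
    have hK1 : (1:ℝ) ≤ (K:ℝ) := by exact_mod_cast hK
    have huge : ((K:ℝ)+1) * F ≤ u := by rw [← hcast]; exact hu
    have hu1 : (1:ℝ) < u := by nlinarith
    have hu0 : (0:ℝ) < u := by linarith
    have huK1 : (0:ℝ) < u - ((K:ℝ)+1) := by nlinarith
    have hukf : (K:ℝ) * F + 2 ≤ u := by nlinarith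
    -- exponent arithmetic
    have hexp : (K+1) * F - 1 = (K * F - 1) + F := by
      have h1 : 1 ≤ K * F := Nat.one_le_of_lt (Nat.lt_of_lt_of_le Nat.one_lt_two (le_trans hF (Nat.le_mul_of_pos_left F hK)))
      rw [Nat.succ_mul]
      omega
    have hFexp : F = (F - 1) + 1 := by omega
    -- the key step
    have hkey : ((u - K) * (u - 1)) ^ (F-1) * (u - 1) ≤ (u * (u - ((K:ℝ)+1))) ^ (F-1) * u := by
      have hc : (K:ℝ) * (F-1 : ℕ) * u ≤ u * (u - ((K:ℝ)+1)) := by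
        have : ((F-1 : ℕ) : ℝ) = (F:ℝ) - 1 := by
          have : 1 ≤ F := by omega
          push_cast [this]; ring
        rw [this]
        nlinarith
      have := key_ineq (F-1) u (u * (u - ((K:ℝ)+1))) K (mul_pos hu0 huK1)
        (by exact_mod_cast Nat.lt_of_lt_of_le Nat.zero_lt_one hK) hu1 hc
      have heq : u * (u - ((K:ℝ)+1)) + K = (u - K) * (u - 1) := by ring
      rw [heq] at this
      exact this
    have hstep : ((u - K)/u * ((u-1)/u)) ^ (F-1) * ((u-1)/u) ≤ ((u - ((K:ℝ)+1))/u) ^ (F-1) := by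
      rw [div_mul_div_comm, div_pow, div_pow, div_mul_div_comm,
        div_le_div_iff₀ (mul_pos (pow_pos (mul_pos hu0 hu0) _) hu0) (pow_pos hu0 _)]
      have hmul := mul_le_mul_of_nonneg_right hkey (pow_nonneg hu0.le (F-1))
      calc ((u-K)*(u-1))^(F-1) * (u-1) * (u^(F-1)) ≤ (u * (u - ((K:ℝ)+1)))^(F-1) * u * u^(F-1) := hmul
        _ = (u - ((K:ℝ)+1))^(F-1) * ((u*u)^(F-1) * u) := by rw [mul_pow, mul_pow]; ring
    calc ((u-1)/u) ^ ((K+1)*F - 1) = ((u-1)/u) ^ (K*F-1) * ((u-1)/u)^(F-1) * ((u-1)/u) := by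
          rw [hexp, pow_add]; nth_rewrite 2 [hFexp]
          rw [pow_add, pow_one, mul_assoc]
      _ ≤ ((u - K)/u) ^ (F-1) * ((u-1)/u)^(F-1) * ((u-1)/u) := by
          have hb : (0:ℝ) ≤ (u-1)/u := div_nonneg (by linarith) hu0.le
          apply mul_le_mul_of_nonneg_right _ hb
          exact mul_le_mul_of_nonneg_right ih' (pow_nonneg hb _)
      _ = ((u - K)/u * ((u-1)/u)) ^ (F-1) * ((u-1)/u) := by rw [mul_pow]
      _ ≤ ((u - ((K:ℝ)+1))/u) ^ (F-1) := hstep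
      _ = ((u - ((K+1 : ℕ):ℝ))/u) ^ (F-1) := by push_cast; ring_nf

/-- Lemma 1: P_perflow ≤ P_random. -/
theorem stmt_9 (U M F : ℕ) (hUM : U ≥ M) (hMF : M ≥ F) (hF : F > 1)
    (hdvd : F ∣ M) (K : ℕ) (hK : K = M / F) :
    1 - (((U : ℝ) - (K : ℝ)) / (U : ℝ)) ^ (F - 1) ≤
      1 - (((U : ℝ) - 1) / (U : ℝ)) ^ (M - 1) := by
  have hF0 : 0 < F := by omega
  have hKF : K * F = M := by rw [hK]; exact Nat.div_mul_cancel hdvd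
  have hK1 : 1 ≤ K := by
    rw [hK]
    exact (Nat.one_le_div_iff hF0).mpr hMF
  have hu : ((K * F : ℕ) : ℝ) ≤ (U : ℝ) := by
    rw [hKF]; exact_mod_cast hUM
  have := aux_ineq F hF K hK1 (U : ℝ) hu
  rw [hKF] at this
  exact sub_le_sub_left this 1
end
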